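/- Let p ≠ 5 be a prime with p ≢ 1 (mod 5), let T be a generator of the group of characters on 𝔽_p, and let N_p denote the number of points in ℙ^4(𝔽_p) on x_0^5+x_1^5+x_2^5+x_3^5+x_4^5−5x_0x_1x_2x_3x_4=0. Then p·N_p = p^4 + p^3 + p^2 + p + 1 + (1/(p−1))·Σ_{e=0}^{p−2} G_{−e}^5 · G_{5e} · T^{−5e}(−5). -/

import Mathlib

open Finset

/-- The standard additive character `θ(a) = e^{2πia/p}` on `𝔽_p`. -/
noncomputable def theta (p : ℕ) (a : ZMod p) : ℂ :=
  Complex.exp (2 * Real.pi * Complex.I * (ZMod.val a : ℂ) / (p : ℂ))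

/-- The Gauss sum `G(χ) = ∑_{x ∈ 𝔽_p} χ(x) θ(x)`. -/
noncomputable def gaussS (p : ℕ) [NeZero p] (χ : MulChar (ZMod p) ℂ) : ℂ :=
  ∑ x : ZMod p, χ x * theta p x

/-- The generalized Jacobi sum `J(χ₁,χ₂,χ₃) = ∑_{t₁+t₂+t₃=1} χ₁(t₁)χ₂(t₂)χ₃(t₃)`. -/
noncomputable def jacobi3 (p : ℕ) [NeZero p] (χ₁ χ₂ χ₃ : MulChar (ZMod p) ℂ) : ℂ :=
  ∑ v ∈ Finset.univ.filter (fun v : ZMod p × ZMod p × ZMod p => v.1 + v.2.1 + v.2.2 = 1),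
    χ₁ v.1 * χ₂ v.2.1 * χ₃ v.2.2


/-- The quintic `x₀⁵+x₁⁵+x₂⁵+x₃⁵+x₄⁵ - 5x₀x₁x₂x₃x₄` evaluated on a vector over `𝔽_p`. -/
def quinticF (p : ℕ) (x : Fin 5 → ZMod p) : ZMod p :=
  (∑ i, x i ^ 5) - 5 * ∏ i, x i

/-- The number of points in `ℙ⁴(𝔽_p)` on the Dwork quintic. -/
noncomputable def Np (p : ℕ) [Fact p.Prime] : ℕ :=
  Nat.card {v : Projectivization (ZMod p) (Fin 5 → ZMod p) // quinticF p v.rep = 0}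



lemma theta_eq (p : ℕ) [NeZero p] (a : ZMod p) : theta p a = ZMod.stdAddChar a := by
  rw [ZMod.stdAddChar_apply, ZMod.toCircle_apply]
  rfl

lemma theta_zero (p : ℕ) [NeZero p] : theta p 0 = 1 := by
  rw [theta_eq]; exact AddChar.map_zero_eq_one _

lemma theta_add (p : ℕ) [NeZero p] (a b : ZMod p) : theta p (a + b) = theta p a * theta p b := by
  simp only [theta_eq]; exact AddChar.map_add_eq_mul _ a b

lemma theta_sum (p : ℕ) [NeZero p] {ι : Type*} (s : Finset ι) (g : ι → ZMod p) :
    theta p (∑ i ∈ s, g i) = ∏ i ∈ s, theta p (g i) := by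
  classical
  induction s using Finset.cons_induction with
  | empty => simp [theta_zero]
  | cons a s ha ih => rw [Finset.sum_cons, Finset.prod_cons, theta_add, ih]

lemma sum_theta_mul (p : ℕ) [Fact p.Prime] (t : ZMod p) :
    ∑ y : ZMod p, theta p (y * t) = if t = 0 then (p : ℂ) else 0 := by
  classical
  simp only [theta_eq]
  rw [AddChar.sum_mulShift t (ZMod.isPrimitive_stdAddChar p)]
  simp [ZMod.card]

lemma sum_theta (p : ℕ) [Fact p.Prime] : ∑ y : ZMod p, theta p y = 0 := by
  have h := sum_theta_mul p 1
  rw [if_neg one_ne_zero] at h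
  simpa using h


lemma five_pow_bij (p : ℕ) [Fact p.Prime] (hp1 : p % 5 ≠ 1) :
    Function.Bijective (fun t : ZMod p => t ^ 5) := by
  have hp : p.Prime := Fact.out
  have hcop : Nat.Coprime (Nat.card (ZMod p)ˣ) 5 := by
    have hcard : Nat.card (ZMod p)ˣ = p - 1 := by
      rw [Nat.card_eq_fintype_card, ZMod.card_units_eq_totient, Nat.totient_prime hp]
    rw [hcard, Nat.coprime_comm]
    refine (Nat.Prime.coprime_iff_not_dvd (by norm_num)).mpr ?_
    intro hdvd
    obtain ⟨k, hk⟩ := hdvd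
    have hp2 : 2 ≤ p := hp.two_le
    omega
  have hu := hcop.pow_left_bijective
  refine Finite.injective_iff_bijective.mp ?_
  intro a b hab
  simp only at hab
  rcases eq_or_ne b 0 with rfl | hb
  · rw [zero_pow (by norm_num)] at hab
    exact pow_eq_zero_iff (by norm_num) |>.mp hab
  rcases eq_or_ne a 0 with rfl | ha
  · rw [zero_pow (by norm_num)] at hab
    exact ((pow_eq_zero_iff (n := 5) (by norm_num)).mp hab.symm).symm
  · have : (Units.mk0 a ha) ^ 5 = (Units.mk0 b hb) ^ 5 := by
      ext; simpa using hab
    have := hu.injective this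
    simpa [Units.ext_iff] using this

lemma T_one_iff (p : ℕ) [Fact p.Prime] (T : MulChar (ZMod p) ℂ)
    (hT : ∀ χ : MulChar (ZMod p) ℂ, ∃ n : ℕ, χ = T ^ n) {z : ZMod p} (hz : z ≠ 0) :
    T z = 1 ↔ z = 1 := by
  constructor
  · intro h1
    by_contra hz1
    haveI : NeZero ((Monoid.exponent (ZMod p)ˣ : ℕ) : ℂ) :=
      ⟨Nat.cast_ne_zero.mpr Monoid.exponent_ne_zero_of_finite⟩
    obtain ⟨χ, hχ⟩ := MulChar.exists_apply_ne_one_of_hasEnoughRootsOfUnity (ZMod p) ℂ hz1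
    obtain ⟨n, rfl⟩ := hT χ
    apply hχ
    have hzu : IsUnit z := isUnit_iff_ne_zero.mpr hz
    have := MulChar.pow_apply_coe T n hzu.unit
    rw [hzu.unit_spec] at this
    rw [this, h1, one_pow]
  · rintro rfl; exact map_one T

lemma geom_ortho (p : ℕ) [Fact p.Prime] (w : ℂ) (hw : w ^ (p - 1) = 1) :
    ∑ e ∈ Finset.range (p - 1), w ^ e = if w = 1 then (p : ℂ) - 1 else 0 := by
  have hp : p.Prime := Fact.out
  split_ifs with h
  · subst h
    simp only [one_pow, Finset.sum_const, Finset.card_range, nsmul_eq_mul, mul_one]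
    have : ((p - 1 : ℕ) : ℂ) = (p : ℂ) - 1 := by
      have := hp.one_le
      push_cast [Nat.cast_sub this]
      ring
    rw [this]
  · rw [geom_sum_eq h, hw]
    simp


lemma pow_apply_ne (p : ℕ) [Fact p.Prime] (χ : MulChar (ZMod p) ℂ) (n : ℕ) {b : ZMod p}
    (hb : b ≠ 0) : (χ ^ n) b = χ b ^ n := by
  have hbu : IsUnit b := isUnit_iff_ne_zero.mpr hb
  have := MulChar.pow_apply_coe χ n hbu.unit
  rwa [hbu.unit_spec] at this

lemma five_ne_zero (p : ℕ) [Fact p.Prime] (hp5 : p ≠ 5) : (5 : ZMod p) ≠ 0 := by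
  have hp : p.Prime := Fact.out
  intro h
  have : p ∣ 5 := (ZMod.natCast_eq_zero_iff 5 p).mp (by exact_mod_cast h)
  rcases (Nat.prime_dvd_prime_iff_eq hp (by norm_num)).mp this with rfl
  exact hp5 rfl

theorem innerSum5 (p : ℕ) [Fact p.Prime] (hp5 : p ≠ 5) (T : MulChar (ZMod p) ℂ)
    (hT : ∀ χ : MulChar (ZMod p) ℂ, ∃ n : ℕ, χ = T ^ n)
    {q : ZMod p ≃ ZMod p} (hq : ∀ t, q t = t ^ 5) (a y : ZMod p) :
    ∑ e ∈ Finset.range (p - 1),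
      (T ^ (-(e : ℤ))) a * (T ^ (5 * e)) y * (T ^ (-5 * (e : ℤ))) (-5 : ZMod p)
    = if a ≠ 0 ∧ y = -5 * q.symm a then (p : ℂ) - 1 else 0 := by
  classical
  have hp : p.Prime := Fact.out
  have h5 : (-5 : ZMod p) ≠ 0 := neg_ne_zero.mpr (five_ne_zero p hp5)
  rcases eq_or_ne a 0 with rfl | ha
  · rw [if_neg (by simp)]
    refine Finset.sum_eq_zero fun e _ => ?_
    rw [MulChar.map_nonunit _ (by simpa using not_isUnit_zero)]
    ring
  rcases eq_or_ne y 0 with rfl | hy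
  · rw [if_neg ?h]
    case h =>
      rintro ⟨-, h0⟩
      have hs : q.symm a = 0 := by
        rcases mul_eq_zero.mp h0.symm with h | h
        · exact absurd h h5
        · exact h
      have := q.apply_eq_iff_eq_symm_apply.mpr hs.symm
      rw [hq] at this
      simp only [zero_pow, ne_eq, OfNat.ofNat_ne_zero, not_false_eq_true] at this
      exact ha this.symm
    refine Finset.sum_eq_zero fun e _ => ?_
    rw [MulChar.map_nonunit (T ^ (5*e)) (by simpa using not_isUnit_zero)]
    ring
  -- now a ≠ 0, y ≠ 0
  have key : ∀ e ∈ Finset.range (p-1),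
      (T ^ (-(e : ℤ))) a * (T ^ (5 * e)) y * (T ^ (-5 * (e : ℤ))) (-5 : ZMod p)
      = (T (a⁻¹ * (y * (-5)⁻¹) ^ 5)) ^ e := by
    intro e _
    have h1 : (T ^ (-(e : ℤ))) a = T a⁻¹ ^ e := by
      rw [zpow_neg, zpow_natCast, MulChar.inv_apply', pow_apply_ne p T e (inv_ne_zero ha)]
    have h2 : (T ^ (5 * e)) y = (T y ^ 5) ^ e := by
      rw [pow_apply_ne p T _ hy, pow_mul]
    have h3 : (T ^ (-5 * (e : ℤ))) (-5 : ZMod p) = (T (-5)⁻¹ ^ 5) ^ e := by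
      have hcast : (-5 : ℤ) * (e : ℤ) = -((5 * e : ℕ) : ℤ) := by push_cast; ring
      rw [hcast, zpow_neg, zpow_natCast, MulChar.inv_apply',
        pow_apply_ne p T _ (inv_ne_zero h5), pow_mul]
    rw [h1, h2, h3, ← mul_pow, ← mul_pow]
    congr 1
    rw [← map_pow T, ← map_pow T, ← map_mul, ← map_mul]
    congr 1
    rw [mul_pow]
    ring
  rw [Finset.sum_congr rfl key]
  have hu : a⁻¹ * (y * (-5)⁻¹) ^ 5 ≠ 0 := by
    apply mul_ne_zero (inv_ne_zero ha)
    exact pow_ne_zero _ (mul_ne_zero hy (inv_ne_zero h5))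
  have hw : (T (a⁻¹ * (y * (-5)⁻¹) ^ 5)) ^ (p - 1) = 1 := by
    rw [← map_pow, ZMod.pow_card_sub_one_eq_one hu, map_one]
  rw [geom_ortho p _ hw]
  have hiff : (T (a⁻¹ * (y * (-5)⁻¹) ^ 5) = 1) ↔ (a ≠ 0 ∧ y = -5 * q.symm a) := by
    rw [T_one_iff p T hT hu]
    constructor
    · intro h
      refine ⟨ha, ?_⟩
      have h2 : (y * (-5)⁻¹) ^ 5 = a := by
        have := congrArg (fun t => a * t) h
        simpa [← mul_assoc, mul_inv_cancel₀ ha] using this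
      have h3 : q (y * (-5)⁻¹) = a := by rw [hq]; exact h2
      have hsymm : q.symm a = y * (-5)⁻¹ := q.symm_apply_eq.mpr h3.symm
      rw [hsymm, mul_comm y, ← mul_assoc, mul_inv_cancel₀ h5, one_mul]
    · rintro ⟨-, rfl⟩
      have h1 : (-5 : ZMod p) * q.symm a * (-5)⁻¹ = q.symm a := by
        rw [mul_comm, ← mul_assoc, inv_mul_cancel₀ h5, one_mul]
      rw [h1]
      have h2 : (q.symm a) ^ 5 = a := by rw [← hq, q.apply_symm_apply]
      rw [h2, inv_mul_cancel₀ ha]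
  simp only [hiff]


lemma gauss_pow (p : ℕ) [Fact p.Prime] (χ : MulChar (ZMod p) ℂ) :
    (gaussS p χ) ^ 5 = ∑ x : Fin 5 → ZMod p, χ (∏ i, x i) * theta p (∑ i, x i) := by
  rw [gaussS, show ((∑ t : ZMod p, χ t * theta p t) ^ 5)
      = ∏ _i : Fin 5, (∑ t : ZMod p, χ t * theta p t) by rw [Finset.prod_const]; simp]
  rw [Finset.prod_univ_sum, Fintype.piFinset_univ]
  refine Finset.sum_congr rfl fun x _ => ?_
  rw [Finset.prod_mul_distrib, ← map_prod, ← theta_sum]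

theorem S_eq (p : ℕ) [Fact p.Prime] (hp5 : p ≠ 5) (T : MulChar (ZMod p) ℂ)
    (hT : ∀ χ : MulChar (ZMod p) ℂ, ∃ n : ℕ, χ = T ^ n)
    {q : ZMod p ≃ ZMod p} (hq : ∀ t, q t = t ^ 5) :
    ∑ e ∈ Finset.range (p - 1),
      (gaussS p (T ^ (-(e : ℤ)))) ^ 5 * gaussS p (T ^ (5 * e)) *
        (T ^ (-5 * (e : ℤ))) (-5 : ZMod p)
    = ((p : ℂ) - 1) * ∑ z : Fin 5 → ZMod p,
        (if ∏ i, z i ≠ 0 then theta p (quinticF p z) else 0) := by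
  classical
  calc
    ∑ e ∈ Finset.range (p - 1), (gaussS p (T ^ (-(e : ℤ)))) ^ 5 * gaussS p (T ^ (5 * e)) *
        (T ^ (-5 * (e : ℤ))) (-5 : ZMod p)
      = ∑ e ∈ Finset.range (p - 1), ∑ x : Fin 5 → ZMod p, ∑ y : ZMod p,
          theta p (∑ i, x i) * theta p y *
            ((T ^ (-(e : ℤ))) (∏ i, x i) * (T ^ (5 * e)) y * (T ^ (-5 * (e : ℤ))) (-5 : ZMod p)) := by
        refine Finset.sum_congr rfl fun e _ => ?_
        rw [gauss_pow, gaussS, Finset.sum_mul_sum, Finset.sum_mul]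
        refine Finset.sum_congr rfl fun x _ => ?_
        rw [Finset.sum_mul]
        refine Finset.sum_congr rfl fun y _ => ?_
        ring
    _ = ∑ x : Fin 5 → ZMod p, ∑ y : ZMod p, theta p (∑ i, x i) * theta p y *
          (∑ e ∈ Finset.range (p - 1),
            (T ^ (-(e : ℤ))) (∏ i, x i) * (T ^ (5 * e)) y * (T ^ (-5 * (e : ℤ))) (-5 : ZMod p)) := by
        rw [Finset.sum_comm]
        refine Finset.sum_congr rfl fun x _ => ?_
        rw [Finset.sum_comm]
        refine Finset.sum_congr rfl fun y _ => ?_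
        rw [Finset.mul_sum]
    _ = ∑ x : Fin 5 → ZMod p,
          (if ∏ i, x i ≠ 0 then
            theta p (∑ i, x i) * theta p (-5 * q.symm (∏ i, x i)) * ((p : ℂ) - 1) else 0) := by
        refine Finset.sum_congr rfl fun x _ => ?_
        rw [Finset.sum_congr rfl fun y _ => by
          rw [innerSum5 p hp5 T hT hq (∏ i, x i) y]]
        by_cases hx : (∏ i, x i) ≠ 0
        · rw [if_pos hx]
          have : ∀ y : ZMod p, theta p (∑ i, x i) * theta p y *
              (if (∏ i, x i) ≠ 0 ∧ y = -5 * q.symm (∏ i, x i) then (p : ℂ) - 1 else 0)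
              = if y = -5 * q.symm (∏ i, x i) then
                  theta p (∑ i, x i) * theta p y * ((p : ℂ) - 1) else 0 := by
            intro y
            by_cases hy : y = -5 * q.symm (∏ i, x i) <;> simp [hy, hx]
          rw [Finset.sum_congr rfl fun y _ => this y, Finset.sum_ite_eq' Finset.univ]
          simp
        · rw [if_neg hx]
          refine Finset.sum_eq_zero fun y _ => ?_
          rw [if_neg (by tauto), mul_zero]
    _ = ∑ z : Fin 5 → ZMod p,
          (if ∏ i, z i ≠ 0 then theta p (quinticF p z) * ((p : ℂ) - 1) else 0) := by
        refine (Fintype.sum_equiv (Equiv.piCongrRight fun _ : Fin 5 => q) _ _ fun z => ?_).symm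
        have hz5 : ∀ i, (Equiv.piCongrRight fun _ : Fin 5 => q) z i = z i ^ 5 := fun i => hq (z i)
        have hprod : (∏ i, (Equiv.piCongrRight fun _ : Fin 5 => q) z i) = (∏ i, z i) ^ 5 := by
          rw [Finset.prod_congr rfl fun i _ => hz5 i, Finset.prod_pow]
        have hcond : ((∏ i, (Equiv.piCongrRight fun _ : Fin 5 => q) z i) ≠ 0) ↔ ((∏ i, z i) ≠ 0) := by
          rw [hprod, pow_ne_zero_iff (by norm_num : 5 ≠ 0)]
        by_cases hz : (∏ i, z i) ≠ 0
        · rw [if_pos hz, if_pos (hcond.mpr hz)]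
          have hsymm : q.symm (∏ i, (Equiv.piCongrRight fun _ : Fin 5 => q) z i) = ∏ i, z i := by
            rw [hprod, ← hq, Equiv.symm_apply_apply]
          rw [hsymm, Finset.sum_congr rfl fun i _ => hz5 i]
          congr 1
          rw [← theta_add, quinticF]
          congr 1
          ring
        · rw [if_neg hz, if_neg (fun h => hz (hcond.mp h))]
    _ = ((p : ℂ) - 1) * ∑ z : Fin 5 → ZMod p,
          (if ∏ i, z i ≠ 0 then theta p (quinticF p z) else 0) := by
        rw [Finset.mul_sum]
        refine Finset.sum_congr rfl fun z _ => ?_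
        by_cases hz : (∏ i, z i) ≠ 0 <;> simp [hz] <;> ring


lemma quintic_smul (p : ℕ) (c : ZMod p) (x : Fin 5 → ZMod p) :
    quinticF p (c • x) = c ^ 5 * quinticF p x := by
  simp only [quinticF, Pi.smul_apply, smul_eq_mul, mul_pow]
  rw [← Finset.mul_sum, Finset.prod_mul_distrib, Finset.prod_const]
  simp only [Finset.card_univ, Fintype.card_fin]
  ring

lemma count_lemma (p : ℕ) [Fact p.Prime] :
    Nat.card {x : Fin 5 → ZMod p // quinticF p x = 0} = (p - 1) * Np p + 1 := by
  classical
  have hp : p.Prime := Fact.out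
  set K := ZMod p
  have key : Nat.card {x : Fin 5 → ZMod p // quinticF p x = 0 ∧ x ≠ 0} = (p - 1) * Np p := by
    set S := {v : Projectivization K (Fin 5 → K) // quinticF p v.rep = 0}
    have hΦ : ∀ av : Kˣ × S, quinticF p ((av.1 : K) • av.2.1.rep) = 0 ∧
        (av.1 : K) • av.2.1.rep ≠ 0 := by
      rintro ⟨a, v, hv⟩
      refine ⟨by rw [quintic_smul, hv, mul_zero], ?_⟩
      exact smul_ne_zero a.ne_zero (Projectivization.rep_nonzero v)
    let Φ : Kˣ × S → {x : Fin 5 → K // quinticF p x = 0 ∧ x ≠ 0} :=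
      fun av => ⟨(av.1 : K) • av.2.1.rep, hΦ av⟩
    have hbij : Function.Bijective Φ := by
      constructor
      · rintro ⟨a, v, hv⟩ ⟨b, w, hw⟩ h
        simp only [Φ, Subtype.mk_eq_mk] at h
        have hvw : v = w := by
          have h1 : (a⁻¹ * b : Kˣ) • w.rep = v.rep := by
            rw [Units.smul_def, Units.val_mul, mul_smul]
            rw [← h, smul_smul]
            simp
          have h2 := (Projectivization.mk_eq_mk_iff K v.rep w.rep
            (Projectivization.rep_nonzero v) (Projectivization.rep_nonzero w)).mpr ⟨_, h1⟩
          rwa [Projectivization.mk_rep, Projectivization.mk_rep] at h2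
        subst hvw
        have hab : a = b := by
          have h0 : ((a : K) - (b : K)) • v.rep = 0 := by rw [sub_smul, h, sub_self]
          rcases smul_eq_zero.mp h0 with h0 | h0
          · exact Units.ext (sub_eq_zero.mp h0)
          · exact absurd h0 (Projectivization.rep_nonzero v)
        subst hab
        rfl
      · rintro ⟨x, hx0, hxne⟩
        obtain ⟨u, hu⟩ := Projectivization.exists_smul_eq_mk_rep K x hxne
        have hfrep : quinticF p (Projectivization.mk K x hxne).rep = 0 := by
          rw [← hu, Units.smul_def, quintic_smul, hx0, mul_zero]
        refine ⟨⟨u⁻¹, ⟨Projectivization.mk K x hxne, hfrep⟩⟩, ?_⟩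
        apply Subtype.ext
        simp only [Φ]
        rw [← hu, Units.smul_def, smul_smul]
        simp
    rw [← Nat.card_eq_of_bijective Φ hbij, Nat.card_prod]
    congr 1
    rw [Nat.card_eq_fintype_card, ZMod.card_units_eq_totient, Nat.totient_prime hp]
  -- split off zero
  have hsplit : Nat.card {x : Fin 5 → ZMod p // quinticF p x = 0}
      = Nat.card {x : Fin 5 → ZMod p // quinticF p x = 0 ∧ x ≠ 0} + 1 := by
    rw [Nat.card_eq_fintype_card, Nat.card_eq_fintype_card, Fintype.card_subtype,
      Fintype.card_subtype]
    have h0 : quinticF p (0 : Fin 5 → ZMod p) = 0 := by simp [quinticF]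
    have : (Finset.univ.filter fun x : Fin 5 → ZMod p => quinticF p x = 0)
        = insert 0 (Finset.univ.filter fun x => quinticF p x = 0 ∧ x ≠ 0) := by
      ext x
      simp only [Finset.mem_filter, Finset.mem_univ, true_and, Finset.mem_insert]
      constructor
      · intro hx
        by_cases hz : x = 0
        · exact Or.inl hz
        · exact Or.inr ⟨hx, hz⟩
      · rintro (rfl | ⟨hx, -⟩)
        · exact h0
        · exact hx
    rw [this, Finset.card_insert_of_notMem (by simp)]
  rw [hsplit, key]


lemma countB (p : ℕ) [Fact p.Prime] {q : ZMod p ≃ ZMod p} (hq : ∀ t, q t = t ^ 5) :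
    (p : ℂ) * (Nat.card {x : Fin 5 → ZMod p // quinticF p x = 0} : ℂ)
    = (p : ℂ) ^ 5 + ((p : ℂ) - 1) * ∑ x : Fin 5 → ZMod p, theta p (quinticF p x) := by
  classical
  have hp : p.Prime := Fact.out
  have h1 : (p : ℂ) * (Nat.card {x : Fin 5 → ZMod p // quinticF p x = 0} : ℂ)
      = ∑ x : Fin 5 → ZMod p, (if quinticF p x = 0 then (p : ℂ) else 0) := by
    rw [Finset.sum_ite, Finset.sum_const, Finset.sum_const_zero, add_zero, nsmul_eq_mul,
      Nat.card_eq_fintype_card, Fintype.card_subtype, mul_comm]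
  have h2 : ∑ x : Fin 5 → ZMod p, (if quinticF p x = 0 then (p : ℂ) else 0)
      = ∑ y : ZMod p, ∑ x : Fin 5 → ZMod p, theta p (y * quinticF p x) := by
    rw [Finset.sum_congr rfl fun x _ => (sum_theta_mul p (quinticF p x)).symm, Finset.sum_comm]
  have hre : ∑ y : ZMod p, ∑ x : Fin 5 → ZMod p, theta p (y ^ 5 * quinticF p x)
      = ∑ y : ZMod p, ∑ x : Fin 5 → ZMod p, theta p (y * quinticF p x) :=
    Fintype.sum_equiv q _ _ (fun y => by simp only [hq])
  have h3 : ∀ y : ZMod p, y ≠ 0 →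
      ∑ x : Fin 5 → ZMod p, theta p (y ^ 5 * quinticF p x)
      = ∑ x : Fin 5 → ZMod p, theta p (quinticF p x) := by
    intro y hy
    refine Fintype.sum_equiv (MulAction.toPerm (Units.mk0 y hy) :
      Equiv.Perm (Fin 5 → ZMod p)) _ _ fun x => ?_
    rw [MulAction.toPerm_apply, Units.smul_def, quintic_smul, Units.val_mk0]
  have h4 : ∑ y : ZMod p, ∑ x : Fin 5 → ZMod p, theta p (y ^ 5 * quinticF p x)
      = ∑ y : ZMod p, (if y = 0 then (p : ℂ) ^ 5 else
          ∑ x : Fin 5 → ZMod p, theta p (quinticF p x)) := by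
    refine Finset.sum_congr rfl fun y _ => ?_
    by_cases hy : y = 0
    · subst hy
      rw [if_pos rfl]
      have : ∀ x : Fin 5 → ZMod p, theta p ((0 : ZMod p) ^ 5 * quinticF p x) = 1 := by
        intro x
        rw [zero_pow (by norm_num), zero_mul, theta_zero]
      rw [Finset.sum_congr rfl fun x _ => this x, Finset.sum_const, Finset.card_univ,
        Fintype.card_fun, ZMod.card, Fintype.card_fin, nsmul_eq_mul, mul_one]
      push_cast
      ring
    · rw [if_neg hy, h3 y hy]
  have h5 : ∑ y : ZMod p, (if y = 0 then (p : ℂ) ^ 5 else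
        ∑ x : Fin 5 → ZMod p, theta p (quinticF p x))
      = (p : ℂ) ^ 5 + ((p : ℂ) - 1) * ∑ x : Fin 5 → ZMod p, theta p (quinticF p x) := by
    rw [Finset.sum_ite, Finset.sum_const, Finset.sum_const]
    have e1 : Finset.univ.filter (fun y : ZMod p => y = 0) = {0} := by
      ext y; simp
    have e2 : Finset.univ.filter (fun y : ZMod p => ¬ y = 0) = Finset.univ.erase 0 := by
      ext y; simp [Finset.mem_erase]
    rw [e1, e2, Finset.card_singleton, Finset.card_erase_of_mem (Finset.mem_univ 0),
      Finset.card_univ, ZMod.card, one_nsmul, nsmul_eq_mul]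
    have : ((p - 1 : ℕ) : ℂ) = (p : ℂ) - 1 := by
      push_cast [Nat.cast_sub hp.one_le]; ring
    rw [this]
  rw [h1, h2, ← hre, h4, h5]

lemma sumD (p : ℕ) [Fact p.Prime] {q : ZMod p ≃ ZMod p} (hq : ∀ t, q t = t ^ 5) :
    ∑ x : Fin 5 → ZMod p, theta p (quinticF p x)
    = (∑ x : Fin 5 → ZMod p, if ∏ i, x i ≠ 0 then theta p (quinticF p x) else 0) + 1 := by
  classical
  have hsplit : ∀ x : Fin 5 → ZMod p, theta p (quinticF p x)
      = (if ∏ i, x i ≠ 0 then theta p (quinticF p x) else 0)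
        + (if ∏ i, x i = 0 then theta p (∑ i, x i ^ 5) else 0) := by
    intro x
    by_cases hx : ∏ i, x i = 0
    · have : quinticF p x = ∑ i, x i ^ 5 := by rw [quinticF, hx, mul_zero, sub_zero]
      simp [hx, this]
    · simp [hx]
  rw [Finset.sum_congr rfl fun x _ => hsplit x, Finset.sum_add_distrib]
  congr 1
  -- ∑ over (∏ = 0) of θ(∑ x^5) = 1
  have hall : ∑ x : Fin 5 → ZMod p, theta p (∑ i, x i ^ 5) = 0 := by
    have h1 : ∑ x : Fin 5 → ZMod p, ∏ i, theta p (x i ^ 5)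
        = ∏ _i : Fin 5, ∑ t : ZMod p, theta p (t ^ 5) := by
      rw [Finset.prod_univ_sum, Fintype.piFinset_univ]
    have h2 : ∑ t : ZMod p, theta p (t ^ 5) = 0 := by
      calc ∑ t : ZMod p, theta p (t ^ 5) = ∑ t : ZMod p, theta p (q t) := by
            simp only [hq]
        _ = ∑ s : ZMod p, theta p s := Fintype.sum_equiv q _ _ (fun t => rfl)
        _ = 0 := sum_theta p
    rw [Finset.sum_congr rfl fun x _ => theta_sum p Finset.univ (fun i => x i ^ 5), h1, h2]
    rw [Finset.prod_const]
    norm_num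
  have hne : ∑ x : Fin 5 → ZMod p, (if ∏ i, x i ≠ 0 then theta p (∑ i, x i ^ 5) else 0)
      = -1 := by
    have hpt : ∀ x : Fin 5 → ZMod p, (if ∏ i, x i ≠ 0 then theta p (∑ i, x i ^ 5) else 0)
        = ∏ i, (if x i ≠ 0 then theta p (x i ^ 5) else 0) := by
      intro x
      by_cases hx : ∏ i, x i ≠ 0
      · rw [if_pos hx, theta_sum]
        refine (Finset.prod_congr rfl fun i _ => ?_)
        rw [if_pos (fun h => hx (Finset.prod_eq_zero (Finset.mem_univ i) h))]
      · rw [if_neg hx]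
        push_neg at hx
        obtain ⟨i, -, hi⟩ := Finset.prod_eq_zero_iff.mp hx
        exact (Finset.prod_eq_zero (Finset.mem_univ i) (by rw [if_neg (by simpa using hi)])).symm
    have h1 : ∑ x : Fin 5 → ZMod p, ∏ i, (if x i ≠ 0 then theta p (x i ^ 5) else 0)
        = ∏ _i : Fin 5, ∑ t : ZMod p, (if t ≠ 0 then theta p (t ^ 5) else 0) := by
      rw [Finset.prod_univ_sum, Fintype.piFinset_univ]
    have h2 : ∑ t : ZMod p, (if t ≠ 0 then theta p (t ^ 5) else 0) = -1 := by
      calc ∑ t : ZMod p, (if t ≠ 0 then theta p (t ^ 5) else 0)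
          = ∑ t : ZMod p, (if q t ≠ 0 then theta p (q t) else 0) := by
            refine Finset.sum_congr rfl fun t _ => ?_
            rw [hq]
            exact (if_congr (by rw [pow_ne_zero_iff (by norm_num : 5 ≠ 0)]) rfl rfl).symm
        _ = ∑ s : ZMod p, (if s ≠ 0 then theta p s else 0) :=
            Fintype.sum_equiv q _ _ (fun t => rfl)
        _ = -1 := by
            rw [Finset.sum_ite, Finset.sum_const_zero, add_zero]
            rw [Finset.filter_ne' Finset.univ (0 : ZMod p),
              Finset.sum_erase_eq_sub (Finset.mem_univ 0), sum_theta p, theta_zero]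
            ring
    rw [Finset.sum_congr rfl fun x _ => hpt x, h1, h2, Finset.prod_const]
    norm_num
  have hfin : ∀ x : Fin 5 → ZMod p, (if ∏ i, x i = 0 then theta p (∑ i, x i ^ 5) else 0)
      = theta p (∑ i, x i ^ 5) - (if ∏ i, x i ≠ 0 then theta p (∑ i, x i ^ 5) else 0) := by
    intro x
    by_cases hx : ∏ i, x i = 0 <;> simp [hx]
  rw [Finset.sum_congr rfl fun x _ => hfin x, Finset.sum_sub_distrib, hall, hne]
  ring


/-- Point-count formula for the Dwork quintic via Gauss sums, `p ≢ 1 (mod 5)` case. -/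
theorem point_count_gauss_not_one (p : ℕ) [Fact p.Prime] (hp5 : p ≠ 5)
    (hp1 : p % 5 ≠ 1)
    (T : MulChar (ZMod p) ℂ) (hT : ∀ χ : MulChar (ZMod p) ℂ, ∃ n : ℕ, χ = T ^ n) :
    (p : ℂ) * (Np p : ℂ) =
      (p : ℂ) ^ 4 + (p : ℂ) ^ 3 + (p : ℂ) ^ 2 + (p : ℂ) + 1 +
        (1 / ((p : ℂ) - 1)) * ∑ e ∈ Finset.range (p - 1),
          (gaussS p (T ^ (-(e : ℤ)))) ^ 5 * gaussS p (T ^ (5 * e)) *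
            (T ^ (-5 * (e : ℤ))) (-5 : ZMod p) := by
  classical
  have hp : p.Prime := Fact.out
  let q : ZMod p ≃ ZMod p := Equiv.ofBijective _ (five_pow_bij p hp1)
  have hq : ∀ t, q t = t ^ 5 := fun t => rfl
  have hS := S_eq p hp5 T hT hq
  have hB := countB p hq
  have hD := sumD p hq
  have hN : ((Nat.card {x : Fin 5 → ZMod p // quinticF p x = 0} : ℕ) : ℂ)
      = ((p : ℂ) - 1) * (Np p : ℂ) + 1 := by
    rw [count_lemma p]
    push_cast [Nat.cast_sub hp.one_le]
    ring
  have hpne : ((p : ℂ) - 1) ≠ 0 := sub_ne_zero.mpr (by exact_mod_cast hp.one_lt.ne')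
  rw [hS]
  rw [hN, hD] at hB
  have hSig : (1 / ((p : ℂ) - 1)) * (((p : ℂ) - 1) * ∑ z : Fin 5 → ZMod p,
      (if ∏ i, z i ≠ 0 then theta p (quinticF p z) else 0))
      = ∑ z : Fin 5 → ZMod p, (if ∏ i, z i ≠ 0 then theta p (quinticF p z) else 0) := by
    field_simp
  rw [hSig]
  refine mul_left_cancel₀ hpne ?_
  linear_combination hB
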